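/- Let d ≥ 2 be a natural number, c > 0, c' > 0, σ > 0 reals, and define f, g ∈ EuclideanSpace ℝ (Fin d) by f 0 = c'·(d−1)·Real.sqrt (1/(d·(d−1))), f j = −c'·Real.sqrt (1/(d·(d−1))) for j ≠ 0, and g 0 = c·(d−1)·Real.sqrt (1/(d·(d−1))), g j = −c·Real.sqrt (1/(d·(d−1))) for j ≠ 0. Consider the family of d coordinate permutations π j = Equiv.swap 0 j for j : Fin d (for j = 0 this is the identity), and define ζ₁ = −Real.log (∑ j : Fin d, Real.exp (⟪f, g ∘ π j⟫ / σ²)) + ⟪f, g⟫/σ² and ζ₂ = −Real.log (∑ j : Fin d, Real.exp (⟪f + g, g ∘ π j⟫ / σ²)) + ⟪f, g⟫/σ². Then ζ₁ = −Real.log (1 + (d−1)·Real.exp (−d·c·c' / ((d−1)·σ²))) and ζ₂ = −Real.log (1 + (d−1)·Real.exp (−d·c·(c+c') / ((d−1)·σ²))) − c²/σ². -/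

import Mathlib

open RealInnerProductSpace

/-- The coordinate-permuted copy of a vector: `(permVec π w) j = w (π j)`. -/
def permVec {d : ℕ} (π : Equiv.Perm (Fin d)) (w : EuclideanSpace ℝ (Fin d)) :
    EuclideanSpace ℝ (Fin d) :=
  WithLp.toLp 2 (fun j => w (π j))

lemma inner_swap {d : ℕ} [NeZero d] (hd : 2 ≤ d) (a b : ℝ)
    (u v : EuclideanSpace ℝ (Fin d))
    (hu0 : u 0 = a * ((d : ℝ) - 1) * Real.sqrt (1 / ((d : ℝ) * ((d : ℝ) - 1))))
    (huj : ∀ i : Fin d, i ≠ 0 → u i = -a * Real.sqrt (1 / ((d : ℝ) * ((d : ℝ) - 1))))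
    (hv0 : v 0 = b * ((d : ℝ) - 1) * Real.sqrt (1 / ((d : ℝ) * ((d : ℝ) - 1))))
    (hvj : ∀ i : Fin d, i ≠ 0 → v i = -b * Real.sqrt (1 / ((d : ℝ) * ((d : ℝ) - 1))))
    (j : Fin d) :
    ⟪u, permVec (Equiv.swap 0 j) v⟫ = if j = 0 then a * b else -(a * b) / ((d : ℝ) - 1) := by
  set s := Real.sqrt (1 / ((d : ℝ) * ((d : ℝ) - 1))) with hs
  have hd1 : (1:ℝ) ≤ (d:ℝ) - 1 := by
    have : (2:ℝ) ≤ (d:ℝ) := by exact_mod_cast hd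
    linarith
  have hdpos : (0:ℝ) < (d:ℝ) := by positivity
  have hd1pos : (0:ℝ) < (d:ℝ) - 1 := by linarith
  have hs2 : s ^ 2 = 1 / ((d : ℝ) * ((d : ℝ) - 1)) := by
    rw [hs, Real.sq_sqrt]; positivity
  have hinner : ⟪u, permVec (Equiv.swap 0 j) v⟫ = ∑ i : Fin d, u i * v (Equiv.swap 0 j i) := by
    simp [PiLp.inner_apply, permVec, RCLike.inner_apply, mul_comm]
  rw [hinner]
  rcases eq_or_ne j 0 with rfl | hj
  · rw [if_pos rfl]
    have hsw : ∀ i : Fin d, (Equiv.swap (0:Fin d) 0) i = i := by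
      simp [Equiv.swap_self]
    have hF : ∀ i : Fin d, u i * v ((Equiv.swap (0:Fin d) 0) i)
        = a * b * s ^ 2 + (if i = 0 then a * b * (d:ℝ) * ((d:ℝ) - 2) * s ^ 2 else 0) := by
      intro i
      rw [hsw]
      rcases eq_or_ne i 0 with rfl | hi
      · rw [if_pos rfl, hu0, hv0]; ring
      · rw [if_neg hi, huj i hi, hvj i hi]; ring
    rw [Finset.sum_congr rfl fun i _ => hF i, Finset.sum_add_distrib, Finset.sum_const,
      Finset.sum_ite_eq' Finset.univ (0 : Fin d)]
    simp only [Finset.card_univ, Fintype.card_fin, Finset.mem_univ, if_pos, nsmul_eq_mul]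
    rw [hs2]
    field_simp
    ring
  · rw [if_neg hj]
    have hF : ∀ i : Fin d, u i * v (Equiv.swap 0 j i)
        = a * b * s ^ 2 + ((if i = 0 then -(a * b * (d:ℝ) * s ^ 2) else 0)
            + (if i = j then -(a * b * (d:ℝ) * s ^ 2) else 0)) := by
      intro i
      rcases eq_or_ne i 0 with rfl | hi
      · rw [Equiv.swap_apply_left, if_pos rfl, if_neg (Ne.symm hj), hu0, hvj j hj]; ring
      · rcases eq_or_ne i j with rfl | hij
        · rw [Equiv.swap_apply_right, if_neg hi, if_pos rfl, huj i hi, hv0]; ring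
        · rw [Equiv.swap_apply_of_ne_of_ne hi hij, if_neg hi, if_neg hij, huj i hi, hvj i hi]
          ring
    rw [Finset.sum_congr rfl fun i _ => hF i, Finset.sum_add_distrib, Finset.sum_add_distrib,
      Finset.sum_const, Finset.sum_ite_eq' Finset.univ (0 : Fin d),
      Finset.sum_ite_eq' Finset.univ j]
    simp only [Finset.card_univ, Fintype.card_fin, Finset.mem_univ, if_pos, nsmul_eq_mul]
    rw [hs2]
    field_simp
    ring

lemma zeta_aux {d : ℕ} [NeZero d] (hd : 2 ≤ d) (A : ℝ) {σ : ℝ} (hσ : 0 < σ) :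
    -Real.log (∑ j : Fin d, Real.exp ((if j = 0 then A else -A / ((d:ℝ) - 1)) / σ ^ 2))
        + A / σ ^ 2
      = -Real.log (1 + ((d:ℝ) - 1) * Real.exp (-(d:ℝ) * A / (((d:ℝ) - 1) * σ ^ 2))) := by
  have hd1 : (1:ℝ) ≤ (d:ℝ) - 1 := by
    have : (2:ℝ) ≤ (d:ℝ) := by exact_mod_cast hd
    linarith
  have hd1pos : (0:ℝ) < (d:ℝ) - 1 := by linarith
  have hσ2 : (0:ℝ) < σ ^ 2 := by positivity
  have hsum : ∑ j : Fin d, Real.exp ((if j = 0 then A else -A / ((d:ℝ) - 1)) / σ ^ 2)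
      = Real.exp (A / σ ^ 2)
        * (1 + ((d:ℝ) - 1) * Real.exp (-(d:ℝ) * A / (((d:ℝ) - 1) * σ ^ 2))) := by
    have : ∀ j : Fin d, Real.exp ((if j = 0 then A else -A / ((d:ℝ) - 1)) / σ ^ 2)
        = if j = 0 then Real.exp (A / σ ^ 2) else Real.exp ((-A / ((d:ℝ) - 1)) / σ ^ 2) := by
      intro j; split <;> rfl
    rw [Finset.sum_congr rfl fun j _ => this j, Finset.sum_ite, Finset.sum_const,
      Finset.sum_const]
    have h1 : (Finset.univ.filter (fun j : Fin d => j = 0)).card = 1 := by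
      rw [Finset.filter_eq']; simp
    have h2 : (Finset.univ.filter (fun j : Fin d => ¬ j = 0)).card = d - 1 := by
      rw [Finset.filter_not, Finset.filter_eq']
      simp [Finset.card_sdiff, NeZero.pos d]
    rw [h1, h2]
    have hcast : ((d - 1 : ℕ) : ℝ) = (d:ℝ) - 1 := by
      have : 1 ≤ d := by omega
      push_cast [this]; ring
    rw [one_smul, nsmul_eq_mul, hcast]
    have hratio : Real.exp ((-A / ((d:ℝ) - 1)) / σ ^ 2)
        = Real.exp (A / σ ^ 2) * Real.exp (-(d:ℝ) * A / (((d:ℝ) - 1) * σ ^ 2)) := by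
      rw [← Real.exp_add]
      congr 1
      field_simp
      ring
    rw [hratio]; ring
  rw [hsum, Real.log_mul (Real.exp_ne_zero _) (by positivity), Real.log_exp]
  ring

/-- **Closed forms of `ζ₁` and `ζ₂` at the worst case.** With the worst-case vectors `f, g` and
the family of transpositions `π j = swap 0 j`, the quantities `ζ₁, ζ₂` of the paper's Lemma 2
take the closed forms appearing in Theorem 3. -/
theorem zeta_closed_forms {d : ℕ} [NeZero d] (hd : 2 ≤ d) {c c' σ : ℝ}
    (hc : 0 < c) (hc' : 0 < c') (hσ : 0 < σ) (f g : EuclideanSpace ℝ (Fin d))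
    (hf0 : f 0 = c' * ((d : ℝ) - 1) * Real.sqrt (1 / ((d : ℝ) * ((d : ℝ) - 1))))
    (hfj : ∀ j : Fin d, j ≠ 0 → f j = -c' * Real.sqrt (1 / ((d : ℝ) * ((d : ℝ) - 1))))
    (hg0 : g 0 = c * ((d : ℝ) - 1) * Real.sqrt (1 / ((d : ℝ) * ((d : ℝ) - 1))))
    (hgj : ∀ j : Fin d, j ≠ 0 → g j = -c * Real.sqrt (1 / ((d : ℝ) * ((d : ℝ) - 1)))) :
    (-Real.log (∑ j : Fin d, Real.exp (⟪f, permVec (Equiv.swap 0 j) g⟫ / σ ^ 2))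
        + ⟪f, g⟫ / σ ^ 2
      = -Real.log (1 + ((d : ℝ) - 1) *
          Real.exp (-(d : ℝ) * c * c' / (((d : ℝ) - 1) * σ ^ 2)))) ∧
    (-Real.log (∑ j : Fin d, Real.exp (⟪f + g, permVec (Equiv.swap 0 j) g⟫ / σ ^ 2))
        + ⟪f, g⟫ / σ ^ 2
      = -Real.log (1 + ((d : ℝ) - 1) *
          Real.exp (-(d : ℝ) * c * (c + c') / (((d : ℝ) - 1) * σ ^ 2))) - c ^ 2 / σ ^ 2) := by
  have hsum0 : ∀ j : Fin d, ⟪f, permVec (Equiv.swap 0 j) g⟫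
      = if j = 0 then c' * c else -(c' * c) / ((d:ℝ) - 1) :=
    inner_swap hd c' c f g hf0 hfj hg0 hgj
  have hfg0 : (f + g) 0 = (c' + c) * ((d:ℝ) - 1) * Real.sqrt (1 / ((d : ℝ) * ((d : ℝ) - 1))) := by
    simp only [PiLp.add_apply, hf0, hg0]; ring
  have hfgj : ∀ j : Fin d, j ≠ 0 →
      (f + g) j = -(c' + c) * Real.sqrt (1 / ((d : ℝ) * ((d : ℝ) - 1))) := by
    intro j hj; simp only [PiLp.add_apply, hfj j hj, hgj j hj]; ring
  have hsum1 : ∀ j : Fin d, ⟪f + g, permVec (Equiv.swap 0 j) g⟫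
      = if j = 0 then (c' + c) * c else -((c' + c) * c) / ((d:ℝ) - 1) :=
    inner_swap hd (c' + c) c (f + g) g hfg0 hfgj hg0 hgj
  have hfg : ⟪f, g⟫ = c' * c := by
    have h0 := hsum0 0
    have heq : permVec (Equiv.swap (0:Fin d) 0) g = g := by
      ext i; show g ((Equiv.swap 0 0) i) = g i; rw [Equiv.swap_self, Equiv.refl_apply]
    rw [heq, if_pos rfl] at h0
    exact h0
  constructor
  · have haux := zeta_aux (d := d) hd (c' * c) hσ
    calc -Real.log (∑ j : Fin d, Real.exp (⟪f, permVec (Equiv.swap 0 j) g⟫ / σ ^ 2))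
          + ⟪f, g⟫ / σ ^ 2
        = -Real.log (∑ j : Fin d,
            Real.exp ((if j = 0 then c' * c else -(c' * c) / ((d:ℝ) - 1)) / σ ^ 2))
          + (c' * c) / σ ^ 2 := by rw [hfg, Finset.sum_congr rfl fun j _ => by rw [hsum0 j]]
      _ = -Real.log (1 + ((d:ℝ) - 1) *
            Real.exp (-(d:ℝ) * (c' * c) / (((d:ℝ) - 1) * σ ^ 2))) := haux
      _ = -Real.log (1 + ((d : ℝ) - 1) *
            Real.exp (-(d : ℝ) * c * c' / (((d : ℝ) - 1) * σ ^ 2))) := by ring_nf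
  · have haux := zeta_aux (d := d) hd ((c' + c) * c) hσ
    calc -Real.log (∑ j : Fin d, Real.exp (⟪f + g, permVec (Equiv.swap 0 j) g⟫ / σ ^ 2))
          + ⟪f, g⟫ / σ ^ 2
        = (-Real.log (∑ j : Fin d,
            Real.exp ((if j = 0 then (c' + c) * c else -((c' + c) * c) / ((d:ℝ) - 1)) / σ ^ 2))
          + ((c' + c) * c) / σ ^ 2) + (c' * c - (c' + c) * c) / σ ^ 2 := by
            rw [hfg, Finset.sum_congr rfl fun j _ => by rw [hsum1 j]]; ring
      _ = -Real.log (1 + ((d:ℝ) - 1) *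
            Real.exp (-(d:ℝ) * ((c' + c) * c) / (((d:ℝ) - 1) * σ ^ 2)))
          + (c' * c - (c' + c) * c) / σ ^ 2 := by rw [haux]
      _ = -Real.log (1 + ((d : ℝ) - 1) *
            Real.exp (-(d : ℝ) * c * (c + c') / (((d : ℝ) - 1) * σ ^ 2))) - c ^ 2 / σ ^ 2 := by
            have harg : -(d:ℝ) * ((c' + c) * c) / (((d:ℝ) - 1) * σ ^ 2)
                = -(d : ℝ) * c * (c + c') / (((d : ℝ) - 1) * σ ^ 2) := by ring
            rw [harg]
            have hσ2 : σ ^ 2 ≠ 0 := by positivity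
            field_simp
            ring
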